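/- Let μ₁,…,μ_G be Borel probability measures on ℝⁿ with finite second moments, let ν be a Borel probability measure on ℝⁿ with finite second moment, let w₁,…,w_G be positive reals with Σₖ wₖ = 1, and for each k let Tₖ be a transport map from μₖ to ν. Then the individual fairness error satisfies E_ind = Σₖ wₖ ∫‖Tₖ(x) − x‖² dμₖ(x) − Σₖ wₖ ‖E[ν] − E[μₖ]‖². -/

import Mathlib

open MeasureTheory
open scoped RealInnerProductSpace

noncomputable section

/-- `T` is a transport map from `μ` to `ν`: a measurable map pushing `μ` forward to `ν`. -/
def IsTransportMap {n : ℕ} (μ ν : Measure (EuclideanSpace ℝ (Fin n)))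
    (T : EuclideanSpace ℝ (Fin n) → EuclideanSpace ℝ (Fin n)) : Prop :=
  Measurable T ∧ μ.map T = ν

/-- The quadratic cost `∫ ‖T x - x‖² dμ` of a transport map. -/
def transportCost {n : ℕ} (μ : Measure (EuclideanSpace ℝ (Fin n)))
    (T : EuclideanSpace ℝ (Fin n) → EuclideanSpace ℝ (Fin n)) : ℝ :=
  ∫ x, ‖T x - x‖ ^ 2 ∂μ

/-- `π` is a coupling of `μ` and `ν`. -/
def IsCoupling {n : ℕ} (μ ν : Measure (EuclideanSpace ℝ (Fin n)))
    (π : Measure (EuclideanSpace ℝ (Fin n) × EuclideanSpace ℝ (Fin n))) : Prop :=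
  IsProbabilityMeasure π ∧ π.map Prod.fst = μ ∧ π.map Prod.snd = ν

/-- Squared Wasserstein-2 distance: infimum of the quadratic transport cost over couplings. -/
def W2sq {n : ℕ} (μ ν : Measure (EuclideanSpace ℝ (Fin n))) : ℝ :=
  sInf {c : ℝ | ∃ π, IsCoupling μ ν π ∧ c = ∫ p, ‖p.1 - p.2‖ ^ 2 ∂π}

/-- `T` is an optimal transport map from `μ` to `ν`: it is a transport map minimizing the
quadratic cost among all transport maps from `μ` to `ν`. -/
def IsOptimalTransportMap {n : ℕ} (μ ν : Measure (EuclideanSpace ℝ (Fin n)))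
    (T : EuclideanSpace ℝ (Fin n) → EuclideanSpace ℝ (Fin n)) : Prop :=
  IsTransportMap μ ν T ∧
    ∀ S, IsTransportMap μ ν S → transportCost μ T ≤ transportCost μ S

/-- `μ` has finite second moment. -/
def FiniteSecondMoment {n : ℕ} (μ : Measure (EuclideanSpace ℝ (Fin n))) : Prop :=
  Integrable (fun x => ‖x‖ ^ 2) μ

/-- Translation of a measure by the vector `z`. -/
def translateMeasure {n : ℕ} (μ : Measure (EuclideanSpace ℝ (Fin n)))
    (z : EuclideanSpace ℝ (Fin n)) : Measure (EuclideanSpace ℝ (Fin n)) :=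
  μ.map (fun x => x + z)

/-- Mean vector `E[μ] = ∫ x dμ(x)` of a measure. -/
def meanVec {n : ℕ} (μ : Measure (EuclideanSpace ℝ (Fin n))) : EuclideanSpace ℝ (Fin n) :=
  ∫ x, x ∂μ

/-- `ν` is a (Wasserstein) barycenter of the family `μ` with weights `w`:
a probability measure minimizing `fun lam => ∑ k, w k * W2sq (μ k) lam`. -/
def IsBarycenter {n G : ℕ} (μ : Fin G → Measure (EuclideanSpace ℝ (Fin n))) (w : Fin G → ℝ)
    (ν : Measure (EuclideanSpace ℝ (Fin n))) : Prop :=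
  IsProbabilityMeasure ν ∧
    ∀ lam : Measure (EuclideanSpace ℝ (Fin n)), IsProbabilityMeasure lam →
      ∑ k, w k * W2sq (μ k) ν ≤ ∑ k, w k * W2sq (μ k) lam

lemma integrable_of_sq_norm {n : ℕ} {μ : Measure (EuclideanSpace ℝ (Fin n))}
    [IsProbabilityMeasure μ] {f : EuclideanSpace ℝ (Fin n) → EuclideanSpace ℝ (Fin n)}
    (hfm : AEStronglyMeasurable f μ) (hf2 : Integrable (fun x => ‖f x‖ ^ 2) μ) :
    Integrable f μ := by
  refine Integrable.mono' (g := fun x => 1 + ‖f x‖ ^ 2)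
    ((integrable_const 1).add hf2) hfm ?_
  filter_upwards with x
  have h0 : (0:ℝ) ≤ ‖f x‖ := norm_nonneg _
  nlinarith [sq_nonneg (‖f x‖ - 1)]

lemma key_double {n : ℕ} {μ : Measure (EuclideanSpace ℝ (Fin n))}
    [IsProbabilityMeasure μ] {f : EuclideanSpace ℝ (Fin n) → EuclideanSpace ℝ (Fin n)}
    (hfm : AEStronglyMeasurable f μ) (hf2 : Integrable (fun x => ‖f x‖ ^ 2) μ) :
    ∫ x, ∫ y, (1 / 2 : ℝ) * ‖f x - f y‖ ^ 2 ∂μ ∂μ =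
      (∫ x, ‖f x‖ ^ 2 ∂μ) - ‖∫ x, f x ∂μ‖ ^ 2 := by
  have hfi : Integrable f μ := integrable_of_sq_norm hfm hf2
  set m : EuclideanSpace ℝ (Fin n) := ∫ x, f x ∂μ with hm
  set C : ℝ := ∫ y, ‖f y‖ ^ 2 ∂μ with hC
  have hin : ∀ x, ∫ y, (1 / 2 : ℝ) * ‖f x - f y‖ ^ 2 ∂μ =
      (1 / 2) * ‖f x‖ ^ 2 + (1 / 2) * C - ⟪f x, m⟫ := by
    intro x
    have h1 : ∀ y, (1 / 2 : ℝ) * ‖f x - f y‖ ^ 2 =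
        ((1 / 2) * ‖f x‖ ^ 2 + (1 / 2) * ‖f y‖ ^ 2) - ⟪f x, f y⟫ := by
      intro y
      rw [norm_sub_sq_real]; ring
    simp_rw [h1]
    have hA : Integrable (fun y => (1 / 2 : ℝ) * ‖f x‖ ^ 2 + (1 / 2) * ‖f y‖ ^ 2) μ :=
      (integrable_const _).add (hf2.const_mul _)
    rw [integral_sub hA (hfi.const_inner (f x)),
      integral_add (integrable_const ((1 / 2 : ℝ) * ‖f x‖ ^ 2)) (hf2.const_mul _),
      integral_const, integral_const_mul, integral_inner hfi (f x)]
    simp [hC, hm]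
  simp_rw [hin]
  have hInt1 : Integrable (fun x => (1 / 2 : ℝ) * ‖f x‖ ^ 2 + (1 / 2) * C) μ :=
    (hf2.const_mul _).add (integrable_const _)
  rw [integral_sub hInt1 (hfi.inner_const m),
    integral_add (hf2.const_mul _) (integrable_const _), integral_const,
    integral_const_mul]
  have : ∫ x, ⟪f x, m⟫ ∂μ = ⟪m, m⟫ := by
    rw [show (fun x => ⟪f x, m⟫) = (fun x => ⟪m, f x⟫) from funext fun x => real_inner_comm _ _]
    exact integral_inner hfi m
  rw [this, real_inner_self_eq_norm_sq]
  simp only [measure_univ, probReal_univ, ENNReal.toReal_one, one_smul, smul_eq_mul, one_mul, hC]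
  ring

theorem statement12 (n G : ℕ) (μ : Fin G → Measure (EuclideanSpace ℝ (Fin n)))
    [∀ k, IsProbabilityMeasure (μ k)] (h2 : ∀ k, FiniteSecondMoment (μ k))
    (ν : Measure (EuclideanSpace ℝ (Fin n))) [IsProbabilityMeasure ν]
    (hν2 : FiniteSecondMoment ν)
    (w : Fin G → ℝ) (hw : ∀ k, 0 < w k) (hsum : ∑ k, w k = 1)
    (T : Fin G → EuclideanSpace ℝ (Fin n) → EuclideanSpace ℝ (Fin n))
    (hT : ∀ k, IsTransportMap (μ k) ν (T k)) :
    (∑ k, w k * ∫ x, ∫ y, (1 / 2 : ℝ) * ‖(T k x - T k y) - (x - y)‖ ^ 2 ∂(μ k) ∂(μ k)) =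
      (∑ k, w k * ∫ x, ‖T k x - x‖ ^ 2 ∂(μ k)) -
        ∑ k, w k * ‖meanVec ν - meanVec (μ k)‖ ^ 2 := by
  rw [← Finset.sum_sub_distrib]
  refine Finset.sum_congr rfl fun k _ => ?_
  rw [← mul_sub]
  congr 1
  obtain ⟨hTm, hTmap⟩ := hT k
  have hTsq : Integrable (fun x => ‖T k x‖ ^ 2) (μ k) := by
    have : Integrable (fun x => ‖x‖ ^ 2) ((μ k).map (T k)) := hTmap ▸ hν2
    rwa [integrable_map_measure (measurable_norm.pow_const 2).aestronglyMeasurable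
      hTm.aemeasurable] at this
  have hf2 : Integrable (fun x => ‖T k x - x‖ ^ 2) (μ k) := by
    refine Integrable.mono' (g := fun x => 2 * ‖T k x‖ ^ 2 + 2 * ‖x‖ ^ 2)
      ((hTsq.const_mul 2).add ((h2 k).const_mul 2))
      (((hTm.sub measurable_id).norm.pow_const 2).aestronglyMeasurable) ?_
    filter_upwards with x
    have h1 := norm_sub_le (T k x) x
    have h0 : (0:ℝ) ≤ ‖T k x - x‖ := norm_nonneg _
    have h3 : ‖T k x - x‖ ^ 2 ≤ (‖T k x‖ + ‖x‖) ^ 2 := by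
      gcongr
    rw [Real.norm_eq_abs, abs_of_nonneg (by positivity)]
    nlinarith [sq_nonneg (‖T k x‖ - ‖x‖)]
  have hfm : AEStronglyMeasurable (fun x => T k x - x) (μ k) :=
    (hTm.sub measurable_id).aestronglyMeasurable
  have hre : ∀ x y : EuclideanSpace ℝ (Fin n),
      T k x - T k y - (x - y) = (T k x - x) - (T k y - y) := by
    intro x y; abel
  simp_rw [hre]
  rw [key_double hfm hf2]
  congr 1
  have hTi : Integrable (T k) (μ k) :=
    integrable_of_sq_norm hTm.aestronglyMeasurable hTsq
  have hidi : Integrable (fun x => x) (μ k) :=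
    integrable_of_sq_norm aestronglyMeasurable_id (h2 k)
  rw [integral_sub hTi hidi]
  have hTν : ∫ x, T k x ∂(μ k) = meanVec ν := by
    rw [meanVec, ← hTmap]
    exact (integral_map hTm.aemeasurable aestronglyMeasurable_id).symm
  rw [hTν]
  rfl
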